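/- Let Ω ⊂ ℝⁿ be a convex body and let c ∈ [0,|Ω|]. Let (p_k)_{k∈ℕ} ⊂ [1,∞) with p_k → ∞, and for each k let ω_k be a minimizer of J_{p_k} over K_c := { ω ⊆ Ω nonempty compact convex : |ω| = c }. If ω_k → ω* in the Hausdorff distance, then ω* ∈ K_c and ω* minimizes d^H(·,Ω) over K_c, i.e. d^H(ω*,Ω) ≤ d^H(ω,Ω) for every ω ∈ K_c. -/

import Mathlib

open MeasureTheory Metric Filter Topology
open scoped ENNReal NNReal Pointwise

/-- Support function of a set `ω`, as a function of the direction `θ`. -/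
noncomputable def suppFn {n : ℕ} (ω : Set (EuclideanSpace ℝ (Fin n)))
    (θ : EuclideanSpace ℝ (Fin n)) : ℝ :=
  sSup ((fun y => (inner ℝ θ y : ℝ)) '' ω)

/-- The p-distance functional `J_p`. -/
noncomputable def Jp {n : ℕ} (Ω ω : Set (EuclideanSpace ℝ (Fin n))) (p : ℝ) : ℝ :=
  (∫ θ in sphere (0 : EuclideanSpace ℝ (Fin n)) 1,
      |suppFn Ω θ - suppFn ω θ| ^ p ∂(μH[(n : ℝ) - 1])) ^ (1 / p)

/-- The admissible class: nonempty compact convex subsets of `Ω` of volume `c`. -/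
def Kc {n : ℕ} (Ω : Set (EuclideanSpace ℝ (Fin n))) (c : ℝ≥0∞) :
    Set (Set (EuclideanSpace ℝ (Fin n))) :=
  {ω | ω.Nonempty ∧ IsCompact ω ∧ Convex ℝ ω ∧ ω ⊆ Ω ∧ volume ω = c}

variable {n : ℕ}

lemma suppFn_bddAbove {K : Set (EuclideanSpace ℝ (Fin n))} (hK : IsCompact K)
    (θ : EuclideanSpace ℝ (Fin n)) : BddAbove ((fun y => (inner ℝ θ y : ℝ)) '' K) :=
  (hK.image (continuous_const.inner continuous_id)).bddAbove

lemma le_suppFn {K : Set (EuclideanSpace ℝ (Fin n))} (hK : IsCompact K)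
    {y : EuclideanSpace ℝ (Fin n)} (hy : y ∈ K) (θ : EuclideanSpace ℝ (Fin n)) :
    (inner ℝ θ y : ℝ) ≤ suppFn K θ :=
  le_csSup (suppFn_bddAbove hK θ) ⟨y, hy, rfl⟩

lemma suppFn_le {K : Set (EuclideanSpace ℝ (Fin n))} (hne : K.Nonempty)
    {θ : EuclideanSpace ℝ (Fin n)} {b : ℝ} (h : ∀ y ∈ K, (inner ℝ θ y : ℝ) ≤ b) :
    suppFn K θ ≤ b :=
  csSup_le (hne.image _) (by rintro x ⟨y, hy, rfl⟩; exact h y hy)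

lemma suppFn_mono {K L : Set (EuclideanSpace ℝ (Fin n))} (hne : K.Nonempty) (hKL : K ⊆ L)
    (hL : IsCompact L) (θ : EuclideanSpace ℝ (Fin n)) : suppFn K θ ≤ suppFn L θ :=
  suppFn_le hne fun y hy => le_suppFn hL (hKL hy) θ

lemma suppFn_sub_le {K L : Set (EuclideanSpace ℝ (Fin n))} (hKne : K.Nonempty)
    (hKc : IsCompact K) (hLne : L.Nonempty) (hLc : IsCompact L)
    {θ : EuclideanSpace ℝ (Fin n)} (hθ : ‖θ‖ ≤ 1) :
    suppFn K θ - suppFn L θ ≤ hausdorffDist K L := by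
  rw [sub_le_iff_le_add]
  refine suppFn_le hKne fun y hy => ?_
  obtain ⟨z, hz, hdz⟩ := hLc.exists_infDist_eq_dist hLne y
  have h1 : dist y z ≤ hausdorffDist K L := by
    rw [← hdz]
    exact Metric.infDist_le_hausdorffDist_of_mem hy
      (Metric.hausdorffEdist_ne_top_of_nonempty_of_bounded hKne hLne hKc.isBounded hLc.isBounded)
  have h2 : (inner ℝ θ y : ℝ) - (inner ℝ θ z : ℝ) ≤ dist y z := by
    rw [← inner_sub_right]
    calc (inner ℝ θ (y - z) : ℝ) ≤ ‖θ‖ * ‖y - z‖ := real_inner_le_norm _ _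
      _ ≤ 1 * ‖y - z‖ := by nlinarith [norm_nonneg (y - z)]
      _ = dist y z := by rw [one_mul, dist_eq_norm]
  have h3 := le_suppFn hLc hz θ
  linarith

lemma abs_suppFn_sub_le {K L : Set (EuclideanSpace ℝ (Fin n))} (hKne : K.Nonempty)
    (hKc : IsCompact K) (hLne : L.Nonempty) (hLc : IsCompact L)
    {θ : EuclideanSpace ℝ (Fin n)} (hθ : ‖θ‖ ≤ 1) :
    |suppFn K θ - suppFn L θ| ≤ hausdorffDist K L := by
  rw [abs_sub_le_iff]
  refine ⟨suppFn_sub_le hKne hKc hLne hLc hθ, ?_⟩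
  rw [hausdorffDist_comm]
  exact suppFn_sub_le hLne hLc hKne hKc hθ

/-- Separation: a point outside a nonempty compact convex set is separated quantitatively. -/
lemma suppFn_sep {L : Set (EuclideanSpace ℝ (Fin n))} (hLne : L.Nonempty) (hLc : IsCompact L)
    (hLconv : Convex ℝ L) {x : EuclideanSpace ℝ (Fin n)} (hx : x ∉ L) :
    ∃ θ : EuclideanSpace ℝ (Fin n), ‖θ‖ = 1 ∧
      suppFn L θ + infDist x L ≤ (inner ℝ θ x : ℝ) := by
  obtain ⟨y, hy, hdy⟩ := hLc.exists_infDist_eq_dist hLne x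
  have hxyne : x - y ≠ 0 := sub_ne_zero.2 (by rintro rfl; exact hx hy)
  have hnorm : (0:ℝ) < ‖x - y‖ := norm_pos_iff.2 hxyne
  have hproj : ∀ w ∈ L, (inner ℝ (x - y) (w - y) : ℝ) ≤ 0 := by
    rw [← norm_eq_iInf_iff_real_inner_le_zero hLconv hy]
    rw [Metric.infDist_eq_iInf] at hdy
    simp only [dist_eq_norm] at hdy ⊢
    exact hdy.symm ▸ rfl
  refine ⟨‖x - y‖⁻¹ • (x - y), ?_, ?_⟩
  · rw [norm_smul, norm_inv, Real.norm_eq_abs, abs_of_pos hnorm, inv_mul_cancel₀ hnorm.ne']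
  · have hsupp : suppFn L (‖x - y‖⁻¹ • (x - y)) ≤ (inner ℝ (‖x - y‖⁻¹ • (x - y)) y : ℝ) := by
      refine suppFn_le hLne fun w hw => ?_
      have := hproj w hw
      have h2 : (inner ℝ (‖x - y‖⁻¹ • (x - y)) (w - y) : ℝ) ≤ 0 := by
        rw [real_inner_smul_left]
        exact mul_nonpos_of_nonneg_of_nonpos (by positivity) this
      have h3 : (inner ℝ (‖x - y‖⁻¹ • (x - y)) w : ℝ)
          = (inner ℝ (‖x - y‖⁻¹ • (x - y)) y : ℝ) + (inner ℝ (‖x - y‖⁻¹ • (x - y)) (w - y) : ℝ) := by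
        rw [← inner_add_right, add_sub_cancel]
      linarith
    have hix : (inner ℝ (‖x - y‖⁻¹ • (x - y)) x : ℝ)
        = (inner ℝ (‖x - y‖⁻¹ • (x - y)) y : ℝ) + ‖x - y‖ := by
      have : (inner ℝ (‖x - y‖⁻¹ • (x - y)) (x - y) : ℝ) = ‖x - y‖ := by
        rw [real_inner_smul_left, real_inner_self_eq_norm_sq]
        field_simp
      have h3 : (inner ℝ (‖x - y‖⁻¹ • (x - y)) x : ℝ)
          = (inner ℝ (‖x - y‖⁻¹ • (x - y)) y : ℝ) + (inner ℝ (‖x - y‖⁻¹ • (x - y)) (x - y) : ℝ) := by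
        rw [← inner_add_right, add_sub_cancel]
      rw [h3, this]
    rw [hix, hdy, dist_eq_norm]
    linarith

/-- Hard direction: support-function bound on the sphere controls the Hausdorff distance. -/
lemma hausdorffDist_le_of_suppFn {K L : Set (EuclideanSpace ℝ (Fin n))}
    (hKne : K.Nonempty) (hKc : IsCompact K) (hKconv : Convex ℝ K)
    (hLne : L.Nonempty) (hLc : IsCompact L) (hLconv : Convex ℝ L)
    {b : ℝ} (hb : 0 ≤ b)
    (h : ∀ θ : EuclideanSpace ℝ (Fin n), ‖θ‖ = 1 → |suppFn K θ - suppFn L θ| ≤ b) :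
    hausdorffDist K L ≤ b := by
  have key : ∀ (K' L' : Set (EuclideanSpace ℝ (Fin n))), K'.Nonempty → IsCompact K' →
      L'.Nonempty → IsCompact L' → Convex ℝ L' →
      (∀ θ : EuclideanSpace ℝ (Fin n), ‖θ‖ = 1 → suppFn K' θ - suppFn L' θ ≤ b) →
      ∀ x ∈ K', infDist x L' ≤ b := by
    intro K' L' hK'ne hK'c hL'ne hL'c hL'conv hbd x hx
    by_contra hcon
    push_neg at hcon
    have hxL : x ∉ L' := by
      intro hmem
      rw [Metric.infDist_zero_of_mem hmem] at hcon
      exact absurd hb (not_le.2 hcon)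
    obtain ⟨θ, hθ1, hθ2⟩ := suppFn_sep hL'ne hL'c hL'conv hxL
    have h1 : (inner ℝ θ x : ℝ) ≤ suppFn K' θ := le_suppFn hK'c hx θ
    have h2 := hbd θ hθ1
    linarith
  refine Metric.hausdorffDist_le_of_infDist hb ?_ ?_
  · exact key K L hKne hKc hLne hLc hLconv
      (fun θ hθ => (abs_le.1 (h θ hθ)).2.trans_eq' (by ring_nf) |>.trans_eq (by ring) ) 
  · exact key L K hLne hLc hKne hKc hKconv
      (fun θ hθ => by have := (abs_le.1 (h θ hθ)).1; linarith)

/-- The support function is Lipschitz, hence continuous, in the direction. -/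
lemma suppFn_continuous {K : Set (EuclideanSpace ℝ (Fin n))} (hKne : K.Nonempty)
    (hKc : IsCompact K) : Continuous (suppFn K) := by
  obtain ⟨R, hR⟩ := hKc.isBounded.subset_closedBall 0
  have key : ∀ θ θ' : EuclideanSpace ℝ (Fin n),
      suppFn K θ - suppFn K θ' ≤ (max R 0) * ‖θ - θ'‖ := by
    intro θ θ'
    rw [sub_le_iff_le_add]
    refine suppFn_le hKne fun y hy => ?_
    have h1 : (inner ℝ θ y : ℝ) - (inner ℝ θ' y : ℝ) ≤ max R 0 * ‖θ - θ'‖ := by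
      rw [← inner_sub_left]
      calc (inner ℝ (θ - θ') y : ℝ) ≤ ‖θ - θ'‖ * ‖y‖ := real_inner_le_norm _ _
        _ ≤ ‖θ - θ'‖ * max R 0 := by
            refine mul_le_mul_of_nonneg_left ?_ (norm_nonneg _)
            have := hR hy
            rw [mem_closedBall, dist_zero_right] at this
            exact this.trans (le_max_left _ _)
        _ = max R 0 * ‖θ - θ'‖ := mul_comm _ _
    have h2 := le_suppFn hKc hy θ'
    linarith
  have : LipschitzWith (Real.toNNReal (max R 0)) (suppFn K) := by
    refine LipschitzWith.of_dist_le_mul fun θ θ' => ?_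
    rw [Real.dist_eq, Real.coe_toNNReal _ (le_max_right _ _), dist_eq_norm]
    rw [abs_sub_le_iff]
    constructor
    · exact key θ θ'
    · rw [← norm_neg, neg_sub]; exact key θ' θ
  exact this.continuous

lemma part1 {n : ℕ} (Ω : Set (EuclideanSpace ℝ (Fin n)))
    (hΩcomp : IsCompact Ω) (hΩint : (interior Ω).Nonempty)
    (c : ℝ≥0∞)
    (ω : ℕ → Set (EuclideanSpace ℝ (Fin n)))
    (hωmem : ∀ k, ω k ∈ Kc Ω c)
    (ωstar : Set (EuclideanSpace ℝ (Fin n)))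
    (hstarne : ωstar.Nonempty) (hstarcomp : IsCompact ωstar)
    (hconv : Tendsto (fun k => hausdorffDist (ω k) ωstar) atTop (𝓝 0)) :
    ωstar ∈ Kc Ω c := by
  have hωne : ∀ k, (ω k).Nonempty := fun k => (hωmem k).1
  have hωc : ∀ k, IsCompact (ω k) := fun k => (hωmem k).2.1
  have hωconv : ∀ k, Convex ℝ (ω k) := fun k => (hωmem k).2.2.1
  have hωsub : ∀ k, ω k ⊆ Ω := fun k => (hωmem k).2.2.2.1
  have hωvol : ∀ k, volume (ω k) = c := fun k => (hωmem k).2.2.2.2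
  have hEd : ∀ k, EMetric.hausdorffEdist (ω k) ωstar ≠ ⊤ := fun k =>
    Metric.hausdorffEdist_ne_top_of_nonempty_of_bounded (hωne k) hstarne
      (hωc k).isBounded hstarcomp.isBounded
  have hinf1 : ∀ k, ∀ x ∈ ωstar, infDist x (ω k) ≤ hausdorffDist (ω k) ωstar := by
    intro k x hx
    rw [hausdorffDist_comm]
    refine Metric.infDist_le_hausdorffDist_of_mem hx ?_
    rw [EMetric.hausdorffEdist_comm]
    exact hEd k
  have hinf2 : ∀ k, ∀ x ∈ ω k, infDist x ωstar ≤ hausdorffDist (ω k) ωstar := fun k x hx =>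
    Metric.infDist_le_hausdorffDist_of_mem hx (hEd k)
  -- ωstar ⊆ Ω
  have hΩne : Ω.Nonempty := hΩint.mono interior_subset
  have hsubΩ : ωstar ⊆ Ω := by
    intro x hx
    have hle : ∀ k, infDist x Ω ≤ hausdorffDist (ω k) ωstar := fun k =>
      (Metric.infDist_le_infDist_of_subset (hωsub k) (hωne k)).trans (hinf1 k x hx)
    have h0 : infDist x Ω ≤ 0 := ge_of_tendsto hconv (Eventually.of_forall hle)
    have hz : infDist x Ω = 0 := le_antisymm h0 Metric.infDist_nonneg
    exact (hΩcomp.isClosed.mem_iff_infDist_zero hΩne).2 hz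
  -- convexity
  have hstarconv : Convex ℝ ωstar := by
    intro x hx y hy a b ha hb hab
    rw [← hstarcomp.isClosed.closure_eq]
    rw [Metric.mem_closure_iff]
    intro ε hε
    obtain ⟨k, hk⟩ := (hconv.eventually (gt_mem_nhds (show (0:ℝ) < ε/4 by linarith))).exists
    obtain ⟨x', hx', hdx⟩ := (Metric.infDist_lt_iff (hωne k)).1 ((hinf1 k x hx).trans_lt hk)
    obtain ⟨y', hy', hdy⟩ := (Metric.infDist_lt_iff (hωne k)).1 ((hinf1 k y hy).trans_lt hk)
    have hz' : a • x' + b • y' ∈ ω k := hωconv k hx' hy' ha hb hab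
    obtain ⟨w, hw, hdw⟩ := (Metric.infDist_lt_iff hstarne).1 ((hinf2 k _ hz').trans_lt hk)
    refine ⟨w, hw, ?_⟩
    have hd1 : dist (a • x + b • y) (a • x' + b • y') ≤ a * dist x x' + b * dist y y' := by
      calc dist (a • x + b • y) (a • x' + b • y')
          ≤ dist (a • x) (a • x') + dist (b • y) (b • y') := dist_add_add_le _ _ _ _
        _ = ‖a‖ * dist x x' + ‖b‖ * dist y y' := by rw [dist_smul₀, dist_smul₀]
        _ = a * dist x x' + b * dist y y' := by
            rw [Real.norm_eq_abs, Real.norm_eq_abs, abs_of_nonneg ha, abs_of_nonneg hb]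
    have : a * dist x x' + b * dist y y' ≤ a * (ε/4) + b * (ε/4) := by
      have h1 := mul_le_mul_of_nonneg_left hdx.le ha
      have h2 := mul_le_mul_of_nonneg_left hdy.le hb
      linarith
    have habmul : a * (ε/4) + b * (ε/4) = ε/4 := by rw [← add_mul, hab, one_mul]
    calc dist (a • x + b • y) w
        ≤ dist (a • x + b • y) (a • x' + b • y') + dist (a • x' + b • y') w := dist_triangle _ _ _
      _ < ε := by linarith
  -- volume lower bound : c ≤ volume ωstar
  have hdk : Tendsto (fun k : ℕ => hausdorffDist (ω k) ωstar + 1/(k+1)) atTop (𝓝 0) := by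
    have := hconv.add tendsto_one_div_add_atTop_nhds_zero_nat
    simpa using this
  have hdkpos : ∀ k : ℕ, hausdorffDist (ω k) ωstar < hausdorffDist (ω k) ωstar + 1/(k+1) := by
    intro k
    have : (0:ℝ) < 1/(k+1) := by positivity
    linarith
  have hclower : c ≤ volume ωstar := by
    have hsub : ∀ k, ω k ⊆ cthickening (hausdorffDist (ω k) ωstar + 1/(k+1)) ωstar := by
      intro k x hx
      obtain ⟨y, hy, hdy⟩ := (Metric.infDist_lt_iff hstarne).1
        ((hinf2 k x hx).trans_lt (hdkpos k))
      exact Metric.mem_cthickening_of_dist_le x y _ _ hy hdy.le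
    have htends : Tendsto (fun k : ℕ =>
        volume (cthickening (hausdorffDist (ω k) ωstar + 1/(k+1)) ωstar)) atTop
        (𝓝 (volume ωstar)) :=
      (tendsto_measure_cthickening_of_isCompact hstarcomp).comp hdk
    refine ge_of_tendsto htends (Eventually.of_forall fun k => ?_)
    rw [← hωvol k]
    exact measure_mono (hsub k)
  -- volume upper bound
  have hcupper : volume ωstar ≤ c := by
    rcases eq_or_ne (volume ωstar) 0 with h0 | h0
    · rw [h0]; exact zero_le
    have hint : (interior ωstar).Nonempty := by
      by_contra hemp
      rw [Set.not_nonempty_iff_eq_empty] at hemp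
      have hspan : affineSpan ℝ ωstar ≠ ⊤ := by
        intro htop
        rw [← hstarconv.interior_nonempty_iff_affineSpan_eq_top] at htop
        rw [hemp] at htop
        exact htop.ne_empty rfl
      have : volume ωstar = 0 :=
        measure_mono_null (subset_affineSpan ℝ ωstar)
          (MeasureTheory.Measure.addHaar_affineSubspace volume _ hspan)
      exact h0 this
    obtain ⟨x0, hx0⟩ := hint
    obtain ⟨ε, hεpos, hball⟩ := Metric.isOpen_iff.1 isOpen_interior x0 hx0
    set ρ := ε/2 with hρ
    have hρpos : 0 < ρ := by positivity
    have hρball : closedBall x0 ρ ⊆ ωstar := by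
      refine subset_trans (subset_trans ?_ hball) interior_subset
      intro z hz
      rw [mem_closedBall] at hz
      rw [mem_ball]
      have : ρ < ε := by rw [hρ]; linarith
      linarith
    have hfin : volume ωstar ≠ ⊤ := hstarcomp.measure_lt_top.ne
    have hkey : ∀ k : ℕ, hausdorffDist (ω k) ωstar + 1/(k+1) ≤ ρ/2 →
        (AffineMap.homothety x0 (1 - 2*(hausdorffDist (ω k) ωstar + 1/(k+1))/ρ)) '' ωstar
          ⊆ ω k := by
      intro k hk
      set d := hausdorffDist (ω k) ωstar + 1/(k+1) with hddef
      have hdpos : 0 < d := by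
        have h1 : (0:ℝ) < 1/(k+1) := by positivity
        have h2 := hausdorffDist_nonneg (s := ω k) (t := ωstar)
        rw [hddef]; linarith
      set lam := 1 - 2*d/ρ with hlamdef
      clear_value d lam
      have hlam0 : 0 ≤ lam := by
        rw [hlamdef]
        have h2d : 2*d ≤ ρ := by linarith
        have : 2*d/ρ ≤ 1 := by
          rw [div_le_one hρpos]; exact h2d
        linarith
      have hlam1 : lam ≤ 1 := by
        rw [hlamdef]
        have : 0 ≤ 2*d/ρ := by positivity
        linarith
      rintro y ⟨w, hw, rfl⟩
      by_contra hy
      obtain ⟨θ, hθ1, hθ2⟩ := suppFn_sep (hωne k) (hωc k) (hωconv k) hy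
      have hhom : (AffineMap.homothety x0 lam) w = lam • w + (1-lam) • x0 := by
        simp only [AffineMap.homothety_apply, vsub_eq_sub, vadd_eq_add, smul_sub, sub_smul,
          one_smul]
        abel
      have hiy : (inner ℝ θ ((AffineMap.homothety x0 lam) w) : ℝ)
          = lam * (inner ℝ θ w : ℝ) + (1-lam) * (inner ℝ θ x0 : ℝ) := by
        rw [hhom, inner_add_right, real_inner_smul_right, real_inner_smul_right]
      have hw_le : (inner ℝ θ w : ℝ) ≤ suppFn ωstar θ := le_suppFn hstarcomp hw θ
      have hx0_le : (inner ℝ θ x0 : ℝ) + ρ ≤ suppFn ωstar θ := by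
        have hmem : x0 + ρ • θ ∈ ωstar := by
          apply hρball
          rw [mem_closedBall, dist_eq_norm, add_sub_cancel_left, norm_smul, Real.norm_eq_abs,
            abs_of_pos hρpos, hθ1, mul_one]
        have h := le_suppFn hstarcomp hmem θ
        rw [inner_add_right, real_inner_smul_right, real_inner_self_eq_norm_mul_norm, hθ1] at h
        simpa using h
      have hsup_star : suppFn ωstar θ ≤ suppFn (ω k) θ + (d - 1/(k+1)) := by
        have h := suppFn_sub_le hstarne hstarcomp (hωne k) (hωc k) (θ := θ) hθ1.le
        rw [hausdorffDist_comm] at h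
        rw [hddef]; ring_nf; ring_nf at h; linarith
      have hinfd : 0 ≤ infDist ((AffineMap.homothety x0 lam) w) (ω k) := Metric.infDist_nonneg
      have hm1 : lam * (inner ℝ θ w : ℝ) ≤ lam * suppFn ωstar θ :=
        mul_le_mul_of_nonneg_left hw_le hlam0
      have hm2 : (1-lam) * (inner ℝ θ x0 : ℝ) ≤ (1-lam) * (suppFn ωstar θ - ρ) :=
        mul_le_mul_of_nonneg_left (by linarith) (by linarith)
      have hlr : (1-lam)*ρ = 2*d := by
        rw [hlamdef]; field_simp; ring
      have hinvk : (0:ℝ) < 1/(k+1) := by positivity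
      nlinarith [hθ2, hiy]
    have hev : ∀ᶠ k in atTop, ENNReal.ofReal
        ((1 - 2*(hausdorffDist (ω k) ωstar + 1/(k+1))/ρ)^n) * volume ωstar ≤ c := by
      filter_upwards [hdk.eventually (gt_mem_nhds (by positivity : (0:ℝ) < ρ/2))] with k hk
      have hlam0 : 0 ≤ 1 - 2*(hausdorffDist (ω k) ωstar + 1/(k+1))/ρ := by
        have : 2*(hausdorffDist (ω k) ωstar + 1/(k+1))/ρ ≤ 1 := by
          rw [div_le_one hρpos]; linarith
        linarith
      have hsub := hkey k hk.le
      have hml := measure_mono (μ := volume) hsub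
      rw [MeasureTheory.Measure.addHaar_image_homothety, finrank_euclideanSpace_fin,
        hωvol k, abs_of_nonneg (pow_nonneg hlam0 _)] at hml
      exact hml
    have h1 : Tendsto (fun k : ℕ =>
        (1 - 2*(hausdorffDist (ω k) ωstar + 1/(k+1))/ρ)^n) atTop (𝓝 1) := by
      have h2 : Tendsto (fun k : ℕ => 1 - 2*(hausdorffDist (ω k) ωstar + 1/(k+1))/ρ)
          atTop (𝓝 (1 - 2*0/ρ)) :=
        tendsto_const_nhds.sub ((hdk.const_mul 2).div_const ρ)
      have h3 := h2.pow n
      norm_num at h3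
      convert h3 using 3 with k
      norm_num
    have hlim : Tendsto (fun k : ℕ => ENNReal.ofReal
        ((1 - 2*(hausdorffDist (ω k) ωstar + 1/(k+1))/ρ)^n) * volume ωstar) atTop
        (𝓝 (ENNReal.ofReal 1 * volume ωstar)) :=
      ((ENNReal.continuous_mul_const hfin).comp ENNReal.continuous_ofReal).continuousAt.tendsto.comp h1
    have hfinal := le_of_tendsto hlim hev
    simpa using hfinal
  exact ⟨hstarne, hstarcomp, hstarconv, hsubΩ, le_antisymm hcupper hclower⟩


namespace SphereAux

variable {m : ℕ}

lemma norm_sq_eucl {N : ℕ} (x : EuclideanSpace ℝ (Fin N)) : ‖x‖^2 = ∑ i, (x i)^2 := by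
  rw [EuclideanSpace.norm_eq, Real.sq_sqrt (by positivity)]
  simp [Real.norm_eq_abs, sq_abs]

lemma dist_sq_eucl {N : ℕ} (x y : EuclideanSpace ℝ (Fin N)) :
    dist x y ^ 2 = ∑ i, (x i - y i)^2 := by
  rw [EuclideanSpace.dist_eq, Real.sq_sqrt (by positivity)]
  simp [Real.dist_eq, sq_abs]

lemma le_of_sq_le_sq {a b : ℝ} (hb : 0 ≤ b) (h : a^2 ≤ b^2) : a ≤ b :=
  le_of_pow_le_pow_left₀ (by norm_num) hb h

/-- the graph map -/
noncomputable def gMap (m : ℕ) (y : EuclideanSpace ℝ (Fin m)) :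
    EuclideanSpace ℝ (Fin (m+1)) :=
  (WithLp.equiv 2 _).symm
    (fun i => Fin.lastCases (Real.sqrt (1 - ‖y‖^2)) (fun j => y j) i)

lemma gMap_castSucc (y : EuclideanSpace ℝ (Fin m)) (j : Fin m) :
    gMap m y j.castSucc = y j := by
  rw [gMap, WithLp.equiv_symm_apply, PiLp.toLp_apply, Fin.lastCases_castSucc]

lemma gMap_last (y : EuclideanSpace ℝ (Fin m)) :
    gMap m y (Fin.last m) = Real.sqrt (1 - ‖y‖^2) := by
  rw [gMap, WithLp.equiv_symm_apply, PiLp.toLp_apply, Fin.lastCases_last]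

/-- the projection map -/
noncomputable def piMap (m : ℕ) (x : EuclideanSpace ℝ (Fin (m+1))) : EuclideanSpace ℝ (Fin m) :=
  (WithLp.equiv 2 _).symm (fun j => x j.castSucc)

lemma piMap_apply (x : EuclideanSpace ℝ (Fin (m+1))) (j : Fin m) :
    piMap m x j = x j.castSucc := by
  rw [piMap, WithLp.equiv_symm_apply, PiLp.toLp_apply]

lemma piMap_gMap (y : EuclideanSpace ℝ (Fin m)) : piMap m (gMap m y) = y := by
  ext j
  rw [piMap_apply, gMap_castSucc]

lemma piMap_lipschitz : LipschitzWith 1 (piMap m) := by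
  refine LipschitzWith.of_dist_le_mul fun x y => ?_
  rw [NNReal.coe_one, one_mul]
  refine le_of_sq_le_sq dist_nonneg ?_
  rw [dist_sq_eucl, dist_sq_eucl]
  have : ∀ j : Fin m, (piMap m x j - piMap m y j)^2 = (x j.castSucc - y j.castSucc)^2 := by
    intro j; rw [piMap_apply, piMap_apply]
  rw [Finset.sum_congr rfl (fun j _ => this j)]
  rw [Fin.sum_univ_castSucc (f := fun i => (x i - y i)^2)]
  have h2 : (0:ℝ) ≤ (x (Fin.last m) - y (Fin.last m))^2 := sq_nonneg _
  linarith

lemma norm_piMap_sq (x : EuclideanSpace ℝ (Fin (m+1))) :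
    ‖piMap m x‖^2 = ‖x‖^2 - (x (Fin.last m))^2 := by
  rw [norm_sq_eucl, norm_sq_eucl]
  have : ∀ j : Fin m, (piMap m x j)^2 = (x j.castSucc)^2 := fun j => by rw [piMap_apply]
  rw [Finset.sum_congr rfl (fun j _ => this j)]
  rw [Fin.sum_univ_castSucc (f := fun i => (x i)^2)]
  ring

lemma gMap_mem_sphere {y : EuclideanSpace ℝ (Fin m)} (hy : ‖y‖ ≤ 1) :
    gMap m y ∈ sphere (0 : EuclideanSpace ℝ (Fin (m+1))) 1 := by
  rw [mem_sphere_iff_norm, sub_zero]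
  have hy2 : ‖y‖^2 ≤ 1 := by nlinarith [norm_nonneg y]
  have h1 : ‖gMap m y‖^2 = 1 := by
    rw [norm_sq_eucl]
    rw [Fin.sum_univ_castSucc (f := fun i => (gMap m y i)^2)]
    have h2 : ∀ j : Fin m, (gMap m y j.castSucc)^2 = (y j)^2 := fun j => by rw [gMap_castSucc]
    rw [Finset.sum_congr rfl (fun j _ => h2 j), gMap_last,
      Real.sq_sqrt (by linarith : (0:ℝ) ≤ 1 - ‖y‖^2), ← norm_sq_eucl]
    ring
  have := norm_nonneg (gMap m y)
  nlinarith

lemma hausdorff_closedBall_pos (δ : ℝ) (hδ : 0 < δ) :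
    0 < μH[(m:ℝ)] (closedBall (0 : EuclideanSpace ℝ (Fin m)) δ) := by
  set e : EuclideanSpace ℝ (Fin m) → (Fin m → ℝ) := fun x i => x i with he_def
  have he : LipschitzWith 1 e := by
    refine LipschitzWith.of_dist_le_mul fun x y => ?_
    rw [NNReal.coe_one, one_mul]
    refine (dist_pi_le_iff dist_nonneg).2 fun i => ?_
    refine le_of_sq_le_sq dist_nonneg ?_
    rw [dist_sq_eucl]
    have h1 : dist (e x i) (e y i)^2 = (x i - y i)^2 := by rw [he_def, Real.dist_eq, sq_abs]
    rw [h1]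
    exact Finset.single_le_sum (f := fun i => (x i - y i)^2) (fun i _ => sq_nonneg _)
      (Finset.mem_univ i)
  have hc : (0:ℝ) < δ / (Real.sqrt m + 1) := by positivity
  have hsub : closedBall (0 : Fin m → ℝ) (δ / (Real.sqrt m + 1)) ⊆ e '' (closedBall 0 δ) := by
    intro z hz
    rw [mem_closedBall, dist_zero_right] at hz
    refine ⟨(WithLp.equiv 2 _).symm z, ?_, by ext i; rfl⟩
    rw [mem_closedBall, dist_zero_right]
    refine le_of_sq_le_sq hδ.le ?_
    rw [norm_sq_eucl]
    have hzi : ∀ i, ((WithLp.equiv 2 (Fin m → ℝ)).symm z i)^2 ≤ (δ / (Real.sqrt m + 1))^2 := by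
      intro i
      rw [WithLp.equiv_symm_apply, PiLp.toLp_apply]
      have h2 : |z i| ≤ δ / (Real.sqrt m + 1) := by
        have := norm_le_pi_norm z i
        rw [Real.norm_eq_abs] at this
        exact this.trans hz
      nlinarith [abs_nonneg (z i), sq_abs (z i)]
    calc ∑ i, ((WithLp.equiv 2 (Fin m → ℝ)).symm z i)^2
        ≤ ∑ _i : Fin m, (δ / (Real.sqrt m + 1))^2 := Finset.sum_le_sum fun i _ => hzi i
      _ = m * (δ / (Real.sqrt m + 1))^2 := by rw [Finset.sum_const]; simp [mul_comm]
      _ ≤ δ^2 := by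
          rw [div_pow, ← mul_div_assoc, div_le_iff₀ (by positivity)]
          have hsq : Real.sqrt m ^ 2 = m := Real.sq_sqrt (Nat.cast_nonneg m)
          nlinarith [Real.sqrt_nonneg (m:ℝ), sq_nonneg δ]
  have hpi : (μH[(m:ℝ)] : Measure (Fin m → ℝ)) = volume := by
    have := MeasureTheory.hausdorffMeasure_pi_real (ι := Fin m)
    rwa [Fintype.card_fin] at this
  have h1 : (0:ℝ≥0∞) < μH[(m:ℝ)] (closedBall (0 : Fin m → ℝ) (δ / (Real.sqrt m + 1))) := by
    rw [hpi]
    exact measure_closedBall_pos _ _ hc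
  have h2 := measure_mono (μ := μH[(m:ℝ)]) hsub
  have h3 := he.hausdorffMeasure_image_le (Nat.cast_nonneg m) (closedBall 0 δ)
  calc (0:ℝ≥0∞) < μH[(m:ℝ)] (closedBall (0 : Fin m → ℝ) (δ / (Real.sqrt m + 1))) := h1
    _ ≤ μH[(m:ℝ)] (e '' (closedBall 0 δ)) := h2
    _ ≤ (1:ℝ≥0) ^ (m:ℝ) * μH[(m:ℝ)] (closedBall (0:EuclideanSpace ℝ (Fin m)) δ) := h3
    _ = μH[(m:ℝ)] (closedBall (0:EuclideanSpace ℝ (Fin m)) δ) := by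
        rw [ENNReal.coe_one, ENNReal.one_rpow, one_mul]

lemma cap_pos (x₀ : EuclideanSpace ℝ (Fin (m+1))) (hx₀ : ‖x₀‖ = 1) {r : ℝ} (hr : 0 < r) :
    0 < μH[(m:ℝ)] (sphere (0 : EuclideanSpace ℝ (Fin (m+1))) 1 ∩ ball x₀ r) := by
  set np : EuclideanSpace ℝ (Fin (m+1)) := EuclideanSpace.single (Fin.last m) 1 with hnp
  have hnpnorm : ‖np‖ = 1 := by rw [hnp, EuclideanSpace.norm_single, norm_one]
  set R := Submodule.reflection (ℝ ∙ (np - x₀))ᗮ with hRdef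
  have hR : R np = x₀ := Submodule.reflection_sub (by rw [hnpnorm, hx₀])
  suffices h : 0 < μH[(m:ℝ)] (sphere (0:EuclideanSpace ℝ (Fin (m+1))) 1 ∩ ball np r) by
    have hRim : (R.toIsometryEquiv) '' (sphere (0:EuclideanSpace ℝ (Fin (m+1))) 1 ∩ ball np r)
        ⊆ sphere (0:EuclideanSpace ℝ (Fin (m+1))) 1 ∩ ball x₀ r := by
      rintro _ ⟨z, ⟨hz1, hz2⟩, rfl⟩
      rw [mem_sphere_iff_norm, sub_zero] at hz1
      rw [mem_ball] at hz2
      constructor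
      · rw [mem_sphere_iff_norm, sub_zero]
        rw [LinearIsometryEquiv.coe_toIsometryEquiv, R.norm_map, hz1]
      · rw [mem_ball, ← hR]
        rw [LinearIsometryEquiv.coe_toIsometryEquiv]
        rw [show dist (R z) (R np) = dist z np from R.toIsometryEquiv.isometry.dist_eq z np]
        exact hz2
    have hmeq := IsometryEquiv.hausdorffMeasure_image R.toIsometryEquiv (m:ℝ)
      (sphere (0:EuclideanSpace ℝ (Fin (m+1))) 1 ∩ ball np r)
    calc (0:ℝ≥0∞) < μH[(m:ℝ)] (sphere (0:EuclideanSpace ℝ (Fin (m+1))) 1 ∩ ball np r) := h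
      _ = μH[(m:ℝ)] (R.toIsometryEquiv '' (sphere (0:EuclideanSpace ℝ (Fin (m+1))) 1 ∩ ball np r)) :=
          hmeq.symm
      _ ≤ _ := measure_mono hRim
  -- north cap
  set δ := min r 1 / 2 with hδdef
  have hδ : 0 < δ := by rw [hδdef]; positivity
  have hδ1 : δ ≤ 1/2 := by rw [hδdef]; have := min_le_right r 1; linarith
  have hδr : δ ≤ r/2 := by rw [hδdef]; have := min_le_left r 1; linarith
  have hsub2 : gMap m '' (closedBall 0 δ) ⊆
      sphere (0:EuclideanSpace ℝ (Fin (m+1))) 1 ∩ ball np r := by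
    rintro _ ⟨y, hy, rfl⟩
    rw [mem_closedBall, dist_zero_right] at hy
    have hy1 : ‖y‖ ≤ 1 := hy.trans (by linarith)
    refine ⟨gMap_mem_sphere hy1, ?_⟩
    rw [mem_ball]
    have hdsq : dist (gMap m y) np ^ 2 ≤ 2 * ‖y‖^2 := by
      rw [dist_sq_eucl]
      rw [Fin.sum_univ_castSucc (f := fun i => (gMap m y i - np i)^2)]
      have hnp0 : ∀ j : Fin m, np j.castSucc = 0 := by
        intro j
        rw [hnp, EuclideanSpace.single_apply, if_neg (Fin.castSucc_lt_last j).ne]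
      have hnp1 : np (Fin.last m) = 1 := by
        rw [hnp, EuclideanSpace.single_apply, if_pos rfl]
      have hterm : ∀ j : Fin m, (gMap m y j.castSucc - np j.castSucc)^2 = (y j)^2 := by
        intro j; rw [gMap_castSucc, hnp0, sub_zero]
      rw [Finset.sum_congr rfl (fun j _ => hterm j), gMap_last, hnp1]
      rw [← norm_sq_eucl]
      set s := Real.sqrt (1 - ‖y‖^2) with hs
      have hu : (0:ℝ) ≤ 1 - ‖y‖^2 := by nlinarith [norm_nonneg y]
      have hs0 : 0 ≤ s := Real.sqrt_nonneg _
      have hs2 : s^2 = 1 - ‖y‖^2 := Real.sq_sqrt hu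
      have hs1 : s ≤ 1 := by nlinarith
      nlinarith [mul_nonneg hs0 (sub_nonneg.2 hs1)]
    refine lt_of_pow_lt_pow_left₀ 2 hr.le ?_
    calc dist (gMap m y) np ^ 2 ≤ 2 * ‖y‖^2 := hdsq
      _ ≤ 2 * δ^2 := by nlinarith [norm_nonneg y]
      _ < r^2 := by nlinarith
  have hBpos := hausdorff_closedBall_pos (m := m) δ hδ
  have him : piMap m '' (gMap m '' (closedBall 0 δ)) = closedBall 0 δ := by
    rw [Set.image_image]
    have : ∀ y : EuclideanSpace ℝ (Fin m), piMap m (gMap m y) = y := piMap_gMap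
    calc (fun y => piMap m (gMap m y)) '' (closedBall 0 δ)
        = (fun y => y) '' (closedBall 0 δ) := by
          apply Set.image_congr
          intro y _
          exact this y
      _ = closedBall 0 δ := Set.image_id _
  have hlip := piMap_lipschitz.hausdorffMeasure_image_le (Nat.cast_nonneg m)
    (gMap m '' (closedBall 0 δ))
  rw [him] at hlip
  calc (0:ℝ≥0∞) < μH[(m:ℝ)] (closedBall (0:EuclideanSpace ℝ (Fin m)) δ) := hBpos
    _ ≤ (1:ℝ≥0) ^ (m:ℝ) * μH[(m:ℝ)] (gMap m '' (closedBall 0 δ)) := hlip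
    _ = μH[(m:ℝ)] (gMap m '' (closedBall 0 δ)) := by
        rw [ENNReal.coe_one, ENNReal.one_rpow, one_mul]
    _ ≤ _ := measure_mono hsub2

lemma eucl_closedBall_finite : μH[(m:ℝ)] (closedBall (0 : EuclideanSpace ℝ (Fin m)) 1) < ⊤ := by
  set j : (Fin m → ℝ) → EuclideanSpace ℝ (Fin m) := fun z => (WithLp.equiv 2 _).symm z with hj
  have hjlip : LipschitzWith (Real.sqrt m).toNNReal j := by
    refine LipschitzWith.of_dist_le_mul fun z z' => ?_
    rw [Real.coe_toNNReal _ (Real.sqrt_nonneg _)]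
    refine le_of_sq_le_sq (by positivity) ?_
    rw [mul_pow, Real.sq_sqrt (Nat.cast_nonneg m), dist_sq_eucl]
    have hterm : ∀ i, (j z i - j z' i)^2 ≤ dist z z' ^2 := by
      intro i
      rw [hj]
      have h1 : dist (z i) (z' i) ≤ dist z z' := dist_le_pi_dist z z' i
      rw [Real.dist_eq] at h1
      have h2 : ((WithLp.equiv 2 (Fin m → ℝ)).symm z i) = z i := rfl
      have h3 : ((WithLp.equiv 2 (Fin m → ℝ)).symm z' i) = z' i := rfl
      simp only [h2, h3]
      nlinarith [abs_nonneg (z i - z' i), sq_abs (z i - z' i), dist_nonneg (x := z) (y := z')]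
    calc ∑ i, (j z i - j z' i)^2 ≤ ∑ _i : Fin m, dist z z' ^ 2 :=
          Finset.sum_le_sum fun i _ => hterm i
      _ = m * dist z z' ^ 2 := by rw [Finset.sum_const]; simp [mul_comm]
  have hsub : closedBall (0 : EuclideanSpace ℝ (Fin m)) 1 ⊆ j '' (closedBall 0 1) := by
    intro x hx
    rw [mem_closedBall, dist_zero_right] at hx
    refine ⟨fun i => x i, ?_, by ext i; rfl⟩
    rw [mem_closedBall, dist_zero_right]
    refine pi_norm_le_iff_of_nonneg zero_le_one |>.2 fun i => ?_
    rw [Real.norm_eq_abs]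
    refine le_of_sq_le_sq zero_le_one ?_
    rw [sq_abs, one_pow]
    have h2 : (x i)^2 ≤ ‖x‖^2 := by
      rw [norm_sq_eucl]
      exact Finset.single_le_sum (f := fun i => (x i)^2) (fun i _ => sq_nonneg _)
        (Finset.mem_univ i)
    nlinarith [norm_nonneg x]
  have hpi : (μH[(m:ℝ)] : Measure (Fin m → ℝ)) = volume := by
    have := MeasureTheory.hausdorffMeasure_pi_real (ι := Fin m)
    rwa [Fintype.card_fin] at this
  calc μH[(m:ℝ)] (closedBall (0 : EuclideanSpace ℝ (Fin m)) 1)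
      ≤ μH[(m:ℝ)] (j '' (closedBall 0 1)) := measure_mono hsub
    _ ≤ ((Real.sqrt m).toNNReal : ℝ≥0∞) ^ (m:ℝ) * μH[(m:ℝ)] (closedBall (0:Fin m → ℝ) 1) :=
        hjlip.hausdorffMeasure_image_le (Nat.cast_nonneg m) _
    _ < ⊤ := by
        rw [hpi]
        exact ENNReal.mul_lt_top
          (ENNReal.rpow_lt_top_of_nonneg (Nat.cast_nonneg m) ENNReal.coe_ne_top)
          measure_closedBall_lt_top

set_option maxHeartbeats 1000000 in
lemma sphere_finite :
    μH[(m:ℝ)] (sphere (0 : EuclideanSpace ℝ (Fin (m+1))) 1) < ⊤ := by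
  set τ : ℝ := 1/(m+1) with hτ
  have hτpos : 0 < τ := by positivity
  set A : Set (EuclideanSpace ℝ (Fin m)) := {y | ‖y‖^2 ≤ 1 - τ} with hA
  -- Lipschitz bound for gMap on A
  have hglip : LipschitzOnWith (Real.sqrt (m+2)).toNNReal (gMap m) A := by
    rw [lipschitzOnWith_iff_dist_le_mul]
    intro y hy y' hy'
    rw [hA, Set.mem_setOf_eq] at hy hy'
    rw [Real.coe_toNNReal _ (Real.sqrt_nonneg _)]
    refine le_of_sq_le_sq (by positivity) ?_
    rw [mul_pow, Real.sq_sqrt (by positivity : (0:ℝ) ≤ (m:ℝ)+2)]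
    have hD := dist_nonneg (x := y) (y := y')
    set D := dist y y' with hDdef
    set s := Real.sqrt (1 - ‖y‖^2) with hs
    set t := Real.sqrt (1 - ‖y'‖^2) with ht
    have hu : τ ≤ 1 - ‖y‖^2 := by linarith
    have hv : τ ≤ 1 - ‖y'‖^2 := by linarith
    have hs0 : 0 ≤ s := Real.sqrt_nonneg _
    have ht0 : 0 ≤ t := Real.sqrt_nonneg _
    have hs2 : s^2 = 1 - ‖y‖^2 := Real.sq_sqrt (by linarith)
    have ht2 : t^2 = 1 - ‖y'‖^2 := Real.sq_sqrt (by linarith)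
    have hst : τ ≤ s * t := by nlinarith [mul_nonneg hs0 ht0]
    -- |u - v| ≤ 2 D
    have hnorm1 : ‖y‖ ≤ 1 := le_of_sq_le_sq zero_le_one (by nlinarith)
    have hnorm1' : ‖y'‖ ≤ 1 := le_of_sq_le_sq zero_le_one (by nlinarith)
    have hnd : |‖y‖ - ‖y'‖| ≤ D := by
      rw [hDdef, dist_eq_norm]
      exact abs_norm_sub_norm_le y y'
    have huv : (s^2 - t^2)^2 ≤ 4 * D^2 := by
      rw [hs2, ht2]
      have h1 : (1 - ‖y‖ ^ 2 - (1 - ‖y'‖ ^ 2)) = (‖y'‖ - ‖y‖) * (‖y'‖ + ‖y‖) := by ring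
      rw [h1]
      have h3 : (‖y'‖ - ‖y‖)^2 ≤ D^2 := by
        nlinarith [hnd, sq_abs (‖y‖ - ‖y'‖), abs_nonneg (‖y‖ - ‖y'‖)]
      nlinarith [norm_nonneg y, norm_nonneg y', sq_nonneg (‖y'‖ - ‖y‖)]
    -- (s - t)^2 ≤ (m+1) D^2
    have hst2 : (s - t)^2 * (4*τ) ≤ 4 * D^2 := by
      have hexp : (s-t)^2 * (s+t)^2 = (s^2 - t^2)^2 := by ring
      have hsum : 4*τ ≤ (s+t)^2 := by nlinarith
      nlinarith [sq_nonneg (s - t), sq_nonneg (s+t)]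
    have hst3 : (s - t)^2 ≤ (m+1) * D^2 := by
      have hτm : τ * (m+1) = 1 := by rw [hτ]; field_simp
      nlinarith [sq_nonneg (s-t)]
    -- distance computation
    have hdist : dist (gMap m y) (gMap m y') ^2 = D^2 + (s - t)^2 := by
      rw [dist_sq_eucl]
      rw [Fin.sum_univ_castSucc (f := fun i => (gMap m y i - gMap m y' i)^2)]
      have hterm : ∀ j : Fin m, (gMap m y j.castSucc - gMap m y' j.castSucc)^2
          = (y j - y' j)^2 := by intro j; rw [gMap_castSucc, gMap_castSucc]
      rw [Finset.sum_congr rfl (fun j _ => hterm j), gMap_last, gMap_last, ← hs, ← ht,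
        hDdef, dist_sq_eucl]
    rw [hdist]
    linarith
  -- the cap is covered by two graph images
  set C : Set (EuclideanSpace ℝ (Fin (m+1))) :=
    {x | x ∈ sphere (0 : EuclideanSpace ℝ (Fin (m+1))) 1 ∧ τ ≤ (x (Fin.last m))^2} with hC
  have hCsub : C ⊆ gMap m '' A ∪ (fun x => -x) '' (gMap m '' A) := by
    rintro x ⟨hx1, hx2⟩
    rw [mem_sphere_iff_norm, sub_zero] at hx1
    have hkey : ∀ z : EuclideanSpace ℝ (Fin (m+1)), ‖z‖ = 1 → τ ≤ (z (Fin.last m))^2 →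
        0 ≤ z (Fin.last m) → z ∈ gMap m '' A := by
      intro z hz1 hz2 hz3
      have hpz : ‖piMap m z‖^2 = 1 - (z (Fin.last m))^2 := by
        rw [norm_piMap_sq, hz1]; ring
      refine ⟨piMap m z, ?_, ?_⟩
      · rw [hA, Set.mem_setOf_eq, hpz]; linarith
      · ext i
        induction i using Fin.lastCases with
        | last =>
          rw [gMap_last, hpz]
          have : (1 : ℝ) - (1 - (z (Fin.last m))^2) = (z (Fin.last m))^2 := by ring
          rw [this, Real.sqrt_sq hz3]
        | cast j => rw [gMap_castSucc, piMap_apply]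
    rcases le_or_gt 0 (x (Fin.last m)) with hpos | hneg
    · exact Or.inl (hkey x hx1 hx2 hpos)
    · right
      have hnx : -x ∈ gMap m '' A := by
        refine hkey (-x) (by rw [norm_neg, hx1]) ?_ ?_
        · have : ((-x) (Fin.last m))^2 = (x (Fin.last m))^2 := by
            have h1 : (-x) (Fin.last m) = -(x (Fin.last m)) := rfl
            rw [h1]; ring
          rw [this]; exact hx2
        · have h1 : (-x) (Fin.last m) = -(x (Fin.last m)) := rfl
          rw [h1]; linarith
      exact ⟨-x, hnx, by simp⟩
  -- coordinate swap isometries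
  set T : Fin (m+1) → (EuclideanSpace ℝ (Fin (m+1)) ≃ₗᵢ[ℝ] EuclideanSpace ℝ (Fin (m+1))) :=
    fun i => LinearIsometryEquiv.piLpCongrLeft 2 ℝ ℝ (Equiv.swap i (Fin.last m)) with hT
  have hTapply : ∀ i x j, (T i) x j = x (Equiv.swap i (Fin.last m) j) := by
    intro i x j
    rw [hT]
    rw [LinearIsometryEquiv.piLpCongrLeft_apply]
    rw [Equiv.piCongrLeft'_apply]
    rw [Equiv.symm_swap]
  have hcover : sphere (0 : EuclideanSpace ℝ (Fin (m+1))) 1 ⊆ ⋃ i : Fin (m+1), (T i) '' C := by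
    intro x hx
    rw [mem_sphere_iff_norm, sub_zero] at hx
    have hsum : ∑ i, (x i)^2 = 1 := by rw [← norm_sq_eucl, hx]; norm_num
    have hex : ∃ i, τ ≤ (x i)^2 := by
      by_contra hcon
      push_neg at hcon
      have h1 : ∑ i, (x i)^2 < ∑ _i : Fin (m+1), τ :=
        Finset.sum_lt_sum_of_nonempty (Finset.univ_nonempty) fun i _ => hcon i
      rw [Finset.sum_const, hsum] at h1
      simp only [Finset.card_univ, Fintype.card_fin, nsmul_eq_mul] at h1
      rw [hτ] at h1
      have : ((m:ℝ)+1) * (1/((m:ℝ)+1)) = 1 := by field_simp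
      push_cast at h1
      rw [this] at h1
      exact lt_irrefl _ h1
    obtain ⟨i, hi⟩ := hex
    refine Set.mem_iUnion.2 ⟨i, (T i) x, ⟨?_, ?_⟩, ?_⟩
    · rw [mem_sphere_iff_norm, sub_zero, (T i).norm_map, hx]
    · rw [hTapply, Equiv.swap_apply_right]
      exact hi
    · refine PiLp.ext fun j => ?_
      rw [hTapply, hTapply]
      rw [Equiv.swap_apply_self]
  -- assemble finiteness
  have hAfin : μH[(m:ℝ)] A < ⊤ := by
    refine lt_of_le_of_lt (measure_mono ?_) eucl_closedBall_finite
    intro y hy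
    rw [hA, Set.mem_setOf_eq] at hy
    rw [mem_closedBall, dist_zero_right]
    exact le_of_sq_le_sq zero_le_one (by nlinarith)
  have hgAfin : μH[(m:ℝ)] (gMap m '' A) < ⊤ := by
    refine lt_of_le_of_lt (hglip.hausdorffMeasure_image_le (Nat.cast_nonneg m)) ?_
    exact ENNReal.mul_lt_top
      (ENNReal.rpow_lt_top_of_nonneg (Nat.cast_nonneg m) ENNReal.coe_ne_top) hAfin
  have hnegfin : μH[(m:ℝ)] ((fun x => -x) '' (gMap m '' A)) < ⊤ := by
    have hiso : Isometry (fun x : EuclideanSpace ℝ (Fin (m+1)) => -x) := isometry_neg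
    calc μH[(m:ℝ)] ((fun x => -x) '' (gMap m '' A))
        = μH[(m:ℝ)] (gMap m '' A) := hiso.hausdorffMeasure_image (Or.inl (Nat.cast_nonneg m)) _
      _ < ⊤ := hgAfin
  have hCfin : μH[(m:ℝ)] C < ⊤ := by
    refine lt_of_le_of_lt (measure_mono hCsub) ?_
    exact lt_of_le_of_lt (measure_union_le _ _) (ENNReal.add_lt_top.2 ⟨hgAfin, hnegfin⟩)
  refine lt_of_le_of_lt (measure_mono hcover) ?_
  refine lt_of_le_of_lt (measure_iUnion_le _) ?_
  have hTfin : ∀ i, μH[(m:ℝ)] ((T i) '' C) < ⊤ := by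
    intro i
    have := (T i).toIsometryEquiv.hausdorffMeasure_image (m:ℝ) C
    rw [LinearIsometryEquiv.coe_toIsometryEquiv] at this
    rw [this]
    exact hCfin
  rw [tsum_fintype]
  exact ENNReal.sum_lt_top.2 fun i _ => hTfin i

end SphereAux

section JpBounds
variable {m : ℕ}

lemma integrableOn_abs_rpow {f : EuclideanSpace ℝ (Fin (m+1)) → ℝ} (hf : Continuous f)
    {p : ℝ} (hp : 1 ≤ p) :
    IntegrableOn (fun θ => |f θ| ^ p)
      (sphere (0 : EuclideanSpace ℝ (Fin (m+1))) 1) μH[(m:ℝ)] := by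
  haveI : IsFiniteMeasure ((μH[(m:ℝ)] : Measure (EuclideanSpace ℝ (Fin (m+1)))).restrict
      (sphere 0 1)) := by
    constructor
    rw [Measure.restrict_apply_univ]
    exact SphereAux.sphere_finite
  have hg : Continuous fun θ => |f θ| ^ p :=
    (hf.abs).rpow_const (fun x => Or.inr (by linarith))
  obtain ⟨C, hC⟩ := (isCompact_sphere (0 : EuclideanSpace ℝ (Fin (m+1))) 1)
    |>.exists_bound_of_continuousOn hg.continuousOn
  refine Integrable.mono' (integrable_const C) hg.aestronglyMeasurable ?_
  exact ae_restrict_of_forall_mem isClosed_sphere.measurableSet hC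

lemma sq_dim_cast : ((m+1:ℕ):ℝ) - 1 = (m:ℝ) := by push_cast; ring

lemma Jp_ge (Ω ωt : Set (EuclideanSpace ℝ (Fin (m+1))))
    (hΩne : Ω.Nonempty) (hΩc : IsCompact Ω) (hωne : ωt.Nonempty) (hωc : IsCompact ωt)
    {p b : ℝ} (hp : 1 ≤ p) (hb : 0 ≤ b)
    {U : Set (EuclideanSpace ℝ (Fin (m+1)))} (hUm : MeasurableSet U)
    (hUS : U ⊆ sphere 0 1)
    (hU : ∀ θ ∈ U, b ≤ suppFn Ω θ - suppFn ωt θ) :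
    b * (μH[(m:ℝ)] U).toReal ^ (1/p) ≤ Jp Ω ωt p := by
  have hpne : p ≠ 0 := by linarith
  have hp0 : (0:ℝ) ≤ p := by linarith
  rw [Jp, sq_dim_cast]
  set f : EuclideanSpace ℝ (Fin (m+1)) → ℝ := fun θ => suppFn Ω θ - suppFn ωt θ with hfdef
  have hcont : Continuous f :=
    (suppFn_continuous hΩne hΩc).sub (suppFn_continuous hωne hωc)
  have hint : IntegrableOn (fun θ => |f θ|^p) (sphere 0 1) μH[(m:ℝ)] :=
    integrableOn_abs_rpow hcont hp
  have hUfin : μH[(m:ℝ)] U ≠ ⊤ :=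
    (lt_of_le_of_lt (measure_mono hUS) SphereAux.sphere_finite).ne
  have h1 : b^p * (μH[(m:ℝ)] U).toReal ≤
      ∫ θ in sphere (0:EuclideanSpace ℝ (Fin (m+1))) 1, |f θ|^p ∂μH[(m:ℝ)] := by
    have hintU : IntegrableOn (fun θ => |f θ|^p) U μH[(m:ℝ)] := hint.mono_set hUS
    have h2 : ∫ _θ in U, b^p ∂μH[(m:ℝ)] ≤ ∫ θ in U, |f θ|^p ∂μH[(m:ℝ)] := by
      refine setIntegral_mono_on (integrableOn_const hUfin) hintU hUm ?_
      intro θ hθ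
      have h3 := hU θ hθ
      have h4 : |f θ| = f θ := abs_of_nonneg (by rw [hfdef]; dsimp only; linarith)
      rw [h4]
      exact Real.rpow_le_rpow hb (by rw [hfdef]; dsimp only; linarith) hp0
    have h5 : ∫ θ in U, |f θ|^p ∂μH[(m:ℝ)] ≤
        ∫ θ in sphere (0:EuclideanSpace ℝ (Fin (m+1))) 1, |f θ|^p ∂μH[(m:ℝ)] := by
      refine setIntegral_mono_set hint ?_ (HasSubset.Subset.eventuallyLE hUS)
      exact Eventually.of_forall fun θ => Real.rpow_nonneg (abs_nonneg _) p
    have h6 : ∫ _θ in U, b^p ∂μH[(m:ℝ)] = (μH[(m:ℝ)] U).toReal * b^p := by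
      rw [setIntegral_const, smul_eq_mul]; rfl
    linarith [h2, h5, h6.symm.le]
  have h7 : (0:ℝ) ≤ ∫ θ in sphere (0:EuclideanSpace ℝ (Fin (m+1))) 1, |f θ|^p ∂μH[(m:ℝ)] :=
    integral_nonneg fun θ => Real.rpow_nonneg (abs_nonneg _) p
  have halg : b * (μH[(m:ℝ)] U).toReal ^ (1/p) = (b^p * (μH[(m:ℝ)] U).toReal)^(1/p) := by
    rw [Real.mul_rpow (Real.rpow_nonneg hb p) ENNReal.toReal_nonneg]
    rw [← Real.rpow_mul hb, mul_one_div_cancel hpne, Real.rpow_one]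
  rw [halg]
  exact Real.rpow_le_rpow (by positivity) h1 (by positivity)

lemma Jp_le (Ω ω' : Set (EuclideanSpace ℝ (Fin (m+1))))
    (hΩne : Ω.Nonempty) (hΩc : IsCompact Ω) (hωne : ω'.Nonempty) (hωc : IsCompact ω')
    {p d' : ℝ} (hp : 1 ≤ p) (hd : 0 ≤ d')
    (hbound : ∀ θ : EuclideanSpace ℝ (Fin (m+1)), ‖θ‖ = 1 → |suppFn Ω θ - suppFn ω' θ| ≤ d') :
    Jp Ω ω' p ≤ d' * (μH[(m:ℝ)] (sphere (0:EuclideanSpace ℝ (Fin (m+1))) 1)).toReal ^ (1/p) := by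
  have hpne : p ≠ 0 := by linarith
  have hp0 : (0:ℝ) ≤ p := by linarith
  rw [Jp, sq_dim_cast]
  set f : EuclideanSpace ℝ (Fin (m+1)) → ℝ := fun θ => suppFn Ω θ - suppFn ω' θ with hfdef
  have hcont : Continuous f :=
    (suppFn_continuous hΩne hΩc).sub (suppFn_continuous hωne hωc)
  have hint : IntegrableOn (fun θ => |f θ|^p) (sphere 0 1) μH[(m:ℝ)] :=
    integrableOn_abs_rpow hcont hp
  have hSfin : μH[(m:ℝ)] (sphere (0:EuclideanSpace ℝ (Fin (m+1))) 1) ≠ ⊤ :=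
    SphereAux.sphere_finite.ne
  have h1 : ∫ θ in sphere (0:EuclideanSpace ℝ (Fin (m+1))) 1, |f θ|^p ∂μH[(m:ℝ)] ≤
      d'^p * (μH[(m:ℝ)] (sphere (0:EuclideanSpace ℝ (Fin (m+1))) 1)).toReal := by
    have h2 : ∫ θ in sphere (0:EuclideanSpace ℝ (Fin (m+1))) 1, |f θ|^p ∂μH[(m:ℝ)] ≤
        ∫ _θ in sphere (0:EuclideanSpace ℝ (Fin (m+1))) 1, d'^p ∂μH[(m:ℝ)] := by
      refine setIntegral_mono_on hint (integrableOn_const hSfin)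
        isClosed_sphere.measurableSet ?_
      intro θ hθ
      rw [mem_sphere_zero_iff_norm] at hθ
      exact Real.rpow_le_rpow (abs_nonneg _) (hbound θ hθ) hp0
    rw [setIntegral_const, smul_eq_mul, mul_comm] at h2
    exact h2
  have h7 : (0:ℝ) ≤ ∫ θ in sphere (0:EuclideanSpace ℝ (Fin (m+1))) 1, |f θ|^p ∂μH[(m:ℝ)] :=
    integral_nonneg fun θ => Real.rpow_nonneg (abs_nonneg _) p
  have halg : d' * (μH[(m:ℝ)] (sphere (0:EuclideanSpace ℝ (Fin (m+1))) 1)).toReal ^ (1/p)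
      = (d'^p * (μH[(m:ℝ)] (sphere (0:EuclideanSpace ℝ (Fin (m+1))) 1)).toReal)^(1/p) := by
    rw [Real.mul_rpow (Real.rpow_nonneg hd p) ENNReal.toReal_nonneg]
    rw [← Real.rpow_mul hd, mul_one_div_cancel hpne, Real.rpow_one]
  rw [halg]
  exact Real.rpow_le_rpow h7 h1 (by positivity)

end JpBounds

/-- Any Hausdorff-distance accumulation point of minimizers of `J_{p_k}` (with `p_k → ∞`)
over the class `K_c` belongs to `K_c` and minimizes the Hausdorff distance to `Ω` over `K_c`.
(The limit `ω*` is taken, as usual for Hausdorff convergence, in the space of nonempty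
compact subsets of `ℝⁿ`.) -/
theorem limit_of_minimizers_solves_hausdorff_problem {n : ℕ}
    (Ω : Set (EuclideanSpace ℝ (Fin n)))
    (hΩcomp : IsCompact Ω) (hΩconv : Convex ℝ Ω) (hΩint : (interior Ω).Nonempty)
    (c : ℝ≥0∞) (hc : c ≤ volume Ω)
    (p : ℕ → ℝ) (hp : ∀ k, 1 ≤ p k) (hptop : Tendsto p atTop atTop)
    (ω : ℕ → Set (EuclideanSpace ℝ (Fin n)))
    (hωmem : ∀ k, ω k ∈ Kc Ω c)
    (hωmin : ∀ k, ∀ ω' ∈ Kc Ω c, Jp Ω (ω k) (p k) ≤ Jp Ω ω' (p k))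
    (ωstar : Set (EuclideanSpace ℝ (Fin n)))
    (hstarne : ωstar.Nonempty) (hstarcomp : IsCompact ωstar)
    (hconv : Tendsto (fun k => hausdorffDist (ω k) ωstar) atTop (𝓝 0)) :
    ωstar ∈ Kc Ω c ∧ ∀ ω' ∈ Kc Ω c, hausdorffDist ωstar Ω ≤ hausdorffDist ω' Ω := by
  have hKc := part1 Ω hΩcomp hΩint c ω hωmem ωstar hstarne hstarcomp hconv
  refine ⟨hKc, ?_⟩
  intro ω' hω'
  obtain ⟨hω'ne, hω'c, hω'conv, hω'sub, hω'vol⟩ := hω'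
  obtain ⟨hsne, hsc, hsconv, hssub, hsvol⟩ := hKc
  have hΩne : Ω.Nonempty := hΩint.mono interior_subset
  cases n with
  | zero =>
      haveI : Subsingleton (EuclideanSpace ℝ (Fin 0)) :=
        ⟨fun a b => PiLp.ext fun i => Fin.elim0 i⟩
      have heq : ωstar = Ω := by
        apply Set.eq_of_subset_of_subset hssub
        intro x hx
        obtain ⟨y, hy⟩ := hsne
        rwa [Subsingleton.elim x y]
      rw [heq, Metric.hausdorffDist_self_zero]
      exact hausdorffDist_nonneg
  | succ m =>
      set M := hausdorffDist ωstar Ω with hM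
      set d' := hausdorffDist ω' Ω with hd'
      have hd'0 : 0 ≤ d' := hausdorffDist_nonneg
      refine le_of_forall_pos_le_add fun δ hδ => ?_
      rcases le_or_gt M δ with hMδ | hMδ
      · linarith
      have hfs_cont : Continuous (fun θ => suppFn Ω θ - suppFn ωstar θ) :=
        (suppFn_continuous hΩne hΩcomp).sub (suppFn_continuous hsne hsc)
      have hfs_nonneg : ∀ θ, 0 ≤ suppFn Ω θ - suppFn ωstar θ := fun θ =>
        sub_nonneg.2 (suppFn_mono hsne hssub hΩcomp θ)
      -- find a direction nearly attaining the Hausdorff distance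
      have hex : ∃ θ₀ : EuclideanSpace ℝ (Fin (m+1)), ‖θ₀‖ = 1 ∧
          M - δ/2 < suppFn Ω θ₀ - suppFn ωstar θ₀ := by
        by_contra hcon
        push_neg at hcon
        have hhd : hausdorffDist Ω ωstar ≤ M - δ/2 := by
          refine hausdorffDist_le_of_suppFn hΩne hΩcomp hΩconv hsne hsc hsconv
            (by linarith) ?_
          intro θ hθ
          have h1 := hcon θ hθ
          have h2 := hfs_nonneg θ
          rw [abs_of_nonneg h2]
          linarith
        rw [hausdorffDist_comm, ← hM] at hhd
        linarith
      obtain ⟨θ₀, hθ₀n, hθ₀gt⟩ := hex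
      have hWopen : IsOpen ((fun θ => suppFn Ω θ - suppFn ωstar θ) ⁻¹'
          (Set.Ioi (M - δ/2))) := isOpen_Ioi.preimage hfs_cont
      obtain ⟨r, hr, hrball⟩ := Metric.isOpen_iff.1 hWopen θ₀
        (by simp only [Set.mem_preimage, Set.mem_Ioi]; exact hθ₀gt)
      set U : Set (EuclideanSpace ℝ (Fin (m+1))) :=
        sphere 0 1 ∩ ((fun θ => suppFn Ω θ - suppFn ωstar θ) ⁻¹' (Set.Ioi (M - δ/2)))
        with hUdef
      have hUm : MeasurableSet U :=
        isClosed_sphere.measurableSet.inter hWopen.measurableSet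
      have hUS : U ⊆ sphere 0 1 := Set.inter_subset_left
      have hUpos : 0 < μH[(m:ℝ)] U := by
        refine lt_of_lt_of_le (SphereAux.cap_pos θ₀ hθ₀n hr) (measure_mono ?_)
        rintro x ⟨hx1, hx2⟩
        exact ⟨hx1, hrball hx2⟩
      have hUfin : μH[(m:ℝ)] U ≠ ⊤ :=
        (lt_of_le_of_lt (measure_mono hUS) SphereAux.sphere_finite).ne
      have htpos : 0 < (μH[(m:ℝ)] U).toReal := ENNReal.toReal_pos hUpos.ne' hUfin
      have hSpos : 0 < (μH[(m:ℝ)]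
          (sphere (0:EuclideanSpace ℝ (Fin (m+1))) 1)).toReal :=
        ENNReal.toReal_pos (hUpos.trans_le (measure_mono hUS)).ne'
          SphereAux.sphere_finite.ne
      have hev : ∀ᶠ k in atTop, (M - δ) * (μH[(m:ℝ)] U).toReal ^ (1/(p k)) ≤
          d' * (μH[(m:ℝ)] (sphere (0:EuclideanSpace ℝ (Fin (m+1))) 1)).toReal ^ (1/(p k)) := by
        filter_upwards [hconv.eventually (gt_mem_nhds (show (0:ℝ) < δ/2 by linarith))] with k hk
        obtain ⟨hkne, hkc, hkconv, hksub, hkvol⟩ := hωmem k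
        have hLB : (M - δ) * (μH[(m:ℝ)] U).toReal ^ (1/(p k)) ≤ Jp Ω (ω k) (p k) := by
          refine Jp_ge Ω (ω k) hΩne hΩcomp hkne hkc (hp k) (by linarith) hUm hUS ?_
          intro θ hθ
          have hθS : ‖θ‖ = 1 := by
            have := hUS hθ
            rwa [mem_sphere_zero_iff_norm] at this
          have h1 : M - δ/2 < suppFn Ω θ - suppFn ωstar θ := by
            have := hθ.2
            simpa only [Set.mem_preimage, Set.mem_Ioi] using this
          have h2 : |suppFn (ω k) θ - suppFn ωstar θ| ≤ hausdorffDist (ω k) ωstar :=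
            abs_suppFn_sub_le hkne hkc hsne hsc hθS.le
          have h3 := abs_le.1 h2
          linarith [h3.1, h3.2]
        have hUB : Jp Ω ω' (p k) ≤
            d' * (μH[(m:ℝ)] (sphere (0:EuclideanSpace ℝ (Fin (m+1))) 1)).toReal ^ (1/(p k)) := by
          refine Jp_le Ω ω' hΩne hΩcomp hω'ne hω'c (hp k) hd'0 ?_
          intro θ hθ
          have := abs_suppFn_sub_le hΩne hΩcomp hω'ne hω'c (θ := θ) hθ.le
          rwa [hausdorffDist_comm] at this
        exact hLB.trans ((hωmin k ω' ⟨hω'ne, hω'c, hω'conv, hω'sub, hω'vol⟩).trans hUB)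
      have hinv : Tendsto (fun k => 1 / p k) atTop (𝓝 0) := by
        rw [show (fun k => 1 / p k) = p⁻¹ from funext fun k => one_div (p k)]; exact hptop.inv_tendsto_atTop
      have hrpow : ∀ {a : ℝ}, 0 < a →
          Tendsto (fun k => a ^ (1/(p k))) atTop (𝓝 1) := by
        intro a ha
        have h1 : Tendsto (fun k => Real.exp (Real.log a * (1/p k))) atTop
            (𝓝 (Real.exp 0)) := by
          refine (Real.continuous_exp.tendsto 0).comp ?_
          simpa using hinv.const_mul (Real.log a)
        rw [Real.exp_zero] at h1
        refine h1.congr fun k => ?_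
        rw [Real.rpow_def_of_pos ha]
      have hL : Tendsto (fun k => (M - δ) * (μH[(m:ℝ)] U).toReal ^ (1/(p k))) atTop
          (𝓝 (M - δ)) := by
        have := (hrpow htpos).const_mul (M - δ)
        simpa using this
      have hR : Tendsto (fun k => d' *
          (μH[(m:ℝ)] (sphere (0:EuclideanSpace ℝ (Fin (m+1))) 1)).toReal ^ (1/(p k)))
          atTop (𝓝 d') := by
        have := (hrpow hSpos).const_mul d'
        simpa using this
      have hfin := le_of_tendsto_of_tendsto hL hR hev
      linarith
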